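/- Let Φ ∈ ℝ^{m×N} satisfy Φ Φᵀ = diag(ψ_1,…,ψ_m) with every ψ_i ≥ 0, let γ > 0, y ∈ ℝ^m, and v ∈ ℝ^N. Then the unique minimizer θ* = (ΦᵀΦ + γI)⁻¹(Φᵀ y + γ v) of θ ↦ (1/2)‖y − Φθ‖₂² + (γ/2)‖θ − v‖₂² admits the closed form θ* = v + Φᵀ w, where w ∈ ℝ^m has entries w_i = (y_i − (Φ v)_i)/(γ + ψ_i) for i = 1,…,m. -/
import Mathlib


open Matrix BigOperators

/-- Elementwise ADMM θ-update of DeSCI: when ΦΦᵀ = diag(ψ), ψ_i ≥ 0, γ > 0,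
the unique minimizer θ* = (ΦᵀΦ + γI)⁻¹(Φᵀy + γv) of
θ ↦ (1/2)‖y − Φθ‖² + (γ/2)‖θ − v‖² equals v + Φᵀw with
w_i = (y_i − (Φv)_i)/(γ + ψ_i). -/
theorem stmt_8 (m N : ℕ) (Φ : Matrix (Fin m) (Fin N) ℝ) (ψ : Fin m → ℝ)
    (hΦ : Φ * Φᵀ = Matrix.diagonal ψ) (hψ : ∀ i, 0 ≤ ψ i)
    (γ : ℝ) (hγ : 0 < γ) (y : Fin m → ℝ) (v : Fin N → ℝ)
    (θstar : Fin N → ℝ)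
    (hθ : θstar = ((Φᵀ * Φ + γ • (1 : Matrix (Fin N) (Fin N) ℝ))⁻¹).mulVec
        (Φᵀ.mulVec y + γ • v))
    (w : Fin m → ℝ) (hw : ∀ i, w i = (y i - Φ.mulVec v i) / (γ + ψ i)) :
    (∀ θ, θ ≠ θstar →
      (1/2) * ∑ i, (y i - Φ.mulVec θstar i)^2 + (γ/2) * ∑ j, (θstar j - v j)^2
        < (1/2) * ∑ i, (y i - Φ.mulVec θ i)^2 + (γ/2) * ∑ j, (θ j - v j)^2) ∧
    θstar = v + Φᵀ.mulVec w := by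
  set A : Matrix (Fin N) (Fin N) ℝ := Φᵀ * Φ + γ • (1 : Matrix (Fin N) (Fin N) ℝ) with hA
  -- A is positive definite
  have hApd : A.PosDef := by
    refine Matrix.PosDef.posSemidef_add ?_ ?_
    · have := Matrix.posSemidef_conjTranspose_mul_self Φ
      rwa [Matrix.conjTranspose_eq_transpose_of_trivial] at this
    · rw [Matrix.smul_one_eq_diagonal]
      exact Matrix.posDef_diagonal_iff.mpr fun _ => hγ
  have hAunit : IsUnit A := hApd.isUnit
  -- A θstar = Φᵀ y + γ v
  have hAθ : A.mulVec θstar = Φᵀ.mulVec y + γ • v := by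
    rw [hθ, Matrix.mulVec_mulVec, Matrix.mul_nonsing_inv _ ((Matrix.isUnit_iff_isUnit_det _).1 hAunit), Matrix.one_mulVec]
  -- key identity: Φᵀ (y - Φθ*) = γ (θ* - v)
  have hkey : Φᵀ.mulVec (y - Φ.mulVec θstar) = γ • (θstar - v) := by
    have h1 : (Φᵀ * Φ).mulVec θstar + γ • θstar = Φᵀ.mulVec y + γ • v := by
      have := hAθ
      rwa [hA, Matrix.add_mulVec, Matrix.smul_mulVec, Matrix.one_mulVec] at this
    rw [← Matrix.mulVec_mulVec] at h1
    rw [Matrix.mulVec_sub]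
    funext j
    have := congrFun h1 j
    simp only [Pi.add_apply, Pi.smul_apply, Pi.sub_apply, smul_eq_mul] at this ⊢
    linarith
  constructor
  · intro θ hθne
    set d : Fin N → ℝ := θ - θstar with hd
    have hdne : d ≠ 0 := sub_ne_zero.mpr hθne
    have hθd : ∀ j, θ j = θstar j + d j := by intro j; simp [hd]
    have hθd' : θ = θstar + d := funext hθd
    have hΦθ : ∀ i, Φ.mulVec θ i = Φ.mulVec θstar i + Φ.mulVec d i := by
      intro i
      rw [hθd', Matrix.mulVec_add]
      simp
    -- cross term swap
    have hswap : ∑ i, (y i - Φ.mulVec θstar i) * Φ.mulVec d i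
        = ∑ j, Φᵀ.mulVec (y - Φ.mulVec θstar) j * d j := by
      have := Matrix.dotProduct_mulVec (y - Φ.mulVec θstar) Φ d
      rw [← Matrix.mulVec_transpose] at this
      simpa [dotProduct, Pi.sub_apply] using this
    have hcross : ∑ i, (y i - Φ.mulVec θstar i) * Φ.mulVec d i
        = γ * ∑ j, (θstar j - v j) * d j := by
      rw [hswap, hkey, Finset.mul_sum]
      exact Finset.sum_congr rfl fun j _ => by
        simp [Pi.smul_apply, Pi.sub_apply, smul_eq_mul]; ring
    have hexp1 : ∑ i, (y i - Φ.mulVec θ i)^2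
        = ∑ i, (y i - Φ.mulVec θstar i)^2
          - 2 * ∑ i, (y i - Φ.mulVec θstar i) * Φ.mulVec d i
          + ∑ i, (Φ.mulVec d i)^2 := by
      rw [Finset.mul_sum, ← Finset.sum_sub_distrib, ← Finset.sum_add_distrib]
      exact Finset.sum_congr rfl fun i _ => by rw [hΦθ i]; ring
    have hexp2 : ∑ j, (θ j - v j)^2
        = ∑ j, (θstar j - v j)^2 + 2 * ∑ j, (θstar j - v j) * d j + ∑ j, (d j)^2 := by
      rw [Finset.mul_sum, ← Finset.sum_add_distrib, ← Finset.sum_add_distrib]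
      exact Finset.sum_congr rfl fun j _ => by rw [hθd j]; ring
    have hS1 : 0 ≤ ∑ i, (Φ.mulVec d i)^2 :=
      Finset.sum_nonneg fun i _ => sq_nonneg _
    have hS2 : 0 < ∑ j, (d j)^2 := by
      obtain ⟨j, hj⟩ := Function.ne_iff.mp hdne
      have hj' : d j ≠ 0 := hj
      exact Finset.sum_pos' (fun j _ => sq_nonneg _)
        ⟨j, Finset.mem_univ j, by positivity⟩
    rw [hexp1, hexp2, hcross]
    nlinarith [mul_pos hγ hS2]
  · -- closed form
    have hinv : ∀ i, (γ + ψ i) * w i = y i - Φ.mulVec v i := by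
      intro i
      rw [hw i]
      have h0 : γ + ψ i ≠ 0 := by have := hψ i; positivity
      field_simp
    -- show A (v + Φᵀ w) = Φᵀ y + γ v, then conclude by injectivity
    have hAvw : A.mulVec (v + Φᵀ.mulVec w) = Φᵀ.mulVec y + γ • v := by
      have hΦΦt : (Φ * Φᵀ).mulVec w = fun i => ψ i * w i := by
        rw [hΦ]; funext i; simp [Matrix.mulVec_diagonal]
      have hmid : Φ.mulVec v + ((Φ * Φᵀ).mulVec w + γ • w) = y := by
        funext i
        have := hinv i
        simp only [Pi.add_apply, Pi.smul_apply, smul_eq_mul, congrFun hΦΦt i]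
        linarith
      calc A.mulVec (v + Φᵀ.mulVec w)
          = (Φᵀ * Φ).mulVec v + γ • v + ((Φᵀ * Φ).mulVec (Φᵀ.mulVec w)
              + γ • Φᵀ.mulVec w) := by
            rw [hA, Matrix.add_mulVec, Matrix.mulVec_add, Matrix.smul_mulVec,
              Matrix.one_mulVec, smul_add]
            abel
        _ = Φᵀ.mulVec (Φ.mulVec v + ((Φ * Φᵀ).mulVec w + γ • w)) + γ • v := by
            rw [Matrix.mulVec_add, Matrix.mulVec_add, ← Matrix.mulVec_mulVec,
              ← Matrix.mulVec_mulVec, ← Matrix.mulVec_mulVec, Matrix.mulVec_smul]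
            abel
        _ = Φᵀ.mulVec y + γ • v := by rw [hmid]
    have hinj : Function.Injective A.mulVec :=
      Matrix.mulVec_injective_iff_isUnit.mpr hAunit
    exact hinj (by rw [hAθ, hAvw])
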